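/- Let λ₁, …, λ_n be nonnegative real numbers, not all zero, let φ(x) = ∏_{j=1}^n (x - λ_j)(x + λ_j), and let 0 < p < 2. Then 2·∑_{j=1}^n λ_j^p = (2 sin(pπ/2)/π) · ∫₀^∞ z^(p-1) · (2n - iz·φ'(iz)/φ(iz)) dz, where the integrand is interpreted as the real number ∑_{j=1}^n 2λ_j² z^(p-1)/(z² + λ_j²). -/

import Mathlib

open Real MeasureTheory Set

lemma beta_refl (a : ℝ) (h0 : 0 < a) (h1 : a < 1) :
    ∫ x in Ioo (0:ℝ) 1, x ^ (a-1) * (1-x) ^ (-a) = π / Real.sin (π * a) := by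
  have hc : Complex.betaIntegral a (1-a) = (π : ℂ) / Complex.sin (π * a) := by
    have h2 := Complex.Gamma_mul_Gamma_eq_betaIntegral (s := (a:ℂ)) (t := 1-(a:ℂ))
      (by simpa using h0) (by simp [Complex.sub_re]; linarith)
    rw [Complex.Gamma_mul_Gamma_one_sub] at h2
    simpa [Complex.Gamma_one] using h2.symm
  have key : ∀ x ∈ Set.uIcc (0:ℝ) 1,
      (x:ℂ) ^ ((a:ℂ)-1) * ((1:ℂ)-x) ^ (((1:ℂ)-a)-1) = ((x ^ (a-1) * (1-x) ^ (-a) : ℝ) : ℂ) := by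
    intro x hx
    rw [Set.uIcc_of_le zero_le_one] at hx
    have hx0 : (0:ℝ) ≤ x := hx.1
    have hx1 : (0:ℝ) ≤ 1 - x := by linarith [hx.2]
    rw [Complex.ofReal_mul, Complex.ofReal_cpow hx0, Complex.ofReal_cpow hx1]
    push_cast
    ring_nf
  have h3 : Complex.betaIntegral a (1-a) = ((∫ x in (0:ℝ)..1, x ^ (a-1) * (1-x) ^ (-a) : ℝ) : ℂ) := by
    rw [Complex.betaIntegral, intervalIntegral.integral_congr key]
    exact intervalIntegral.integral_ofReal
  rw [h3] at hc
  have h4 : (∫ x in (0:ℝ)..1, x ^ (a-1) * (1-x) ^ (-a) : ℝ) = π / Real.sin (π * a) := by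
    have := hc
    rw [show ((π:ℂ) / Complex.sin (π * a)) = ((π / Real.sin (π * a) : ℝ) : ℂ) by
      push_cast [Complex.ofReal_sin]; ring_nf] at this
    exact_mod_cast this
  rw [← h4, intervalIntegral.integral_of_le zero_le_one, integral_Ioc_eq_integral_Ioo]


lemma mellin_one_add (a : ℝ) (h0 : 0 < a) (h1 : a < 1)
    (hbeta : ∫ x in Ioo (0:ℝ) 1, x ^ (a-1) * (1-x) ^ (-a) = π / Real.sin (π * a)) :
    ∫ u in Ioi (0:ℝ), u ^ (a-1) / (1+u) = π / Real.sin (π * a) := by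
  have himg : (fun u : ℝ => u / (1+u)) '' Ioi 0 = Ioo 0 1 := by
    ext y
    constructor
    · rintro ⟨u, hu, rfl⟩
      rw [mem_Ioi] at hu
      have h1u : (0:ℝ) < 1 + u := by linarith
      exact ⟨div_pos hu h1u, (div_lt_one h1u).mpr (by linarith)⟩
    · rintro ⟨hy0, hy1⟩
      refine ⟨y / (1-y), ?_, ?_⟩
      · exact div_pos hy0 (by linarith)
      · have : (1:ℝ) - y ≠ 0 := by linarith
        field_simp
        ring
  have hderiv : ∀ u ∈ Ioi (0:ℝ), HasDerivWithinAt (fun u : ℝ => u / (1+u))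
      (((1+u)^2)⁻¹) (Ioi 0) u := by
    intro u hu
    rw [mem_Ioi] at hu
    have h1u : (1:ℝ) + u ≠ 0 := by positivity
    have := (hasDerivAt_id u).div ((hasDerivAt_const u (1:ℝ)).add (hasDerivAt_id u)) h1u
    refine this.hasDerivWithinAt.congr_deriv ?_
    simp only [Pi.add_apply, id]
    field_simp
    ring
  have hinj : InjOn (fun u : ℝ => u / (1+u)) (Ioi 0) := by
    intro u hu v hv h
    rw [mem_Ioi] at hu hv
    simp only at h
    rw [div_eq_div_iff (by positivity) (by positivity)] at h
    nlinarith
  have := integral_image_eq_integral_abs_deriv_smul measurableSet_Ioi hderiv hinj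
    (fun x : ℝ => x ^ (a-1) * (1-x) ^ (-a))
  rw [himg, hbeta] at this
  rw [this]
  refine setIntegral_congr_fun measurableSet_Ioi fun u hu => ?_
  rw [mem_Ioi] at hu
  have h1u : (0:ℝ) < 1 + u := by linarith
  have e1 : (1:ℝ) - u / (1+u) = (1+u)⁻¹ := by field_simp; ring
  rw [smul_eq_mul, abs_of_pos (by positivity), e1, Real.div_rpow hu.le h1u.le,
    Real.inv_rpow h1u.le, ← Real.rpow_neg h1u.le, neg_neg, ← Real.rpow_natCast (1+u) 2,
    ← Real.rpow_neg h1u.le]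
  rw [mul_comm ((1+u) ^ (-((2:ℕ):ℝ)))]
  rw [mul_assoc, ← Real.rpow_add h1u, div_mul_eq_mul_div, mul_div_assoc,
    ← Real.rpow_sub h1u, show a + -((2:ℕ):ℝ) - (a-1) = -1 by push_cast; ring,
    Real.rpow_neg_one, div_eq_mul_inv]

lemma mellin_one_add_sq (s : ℝ) (h0 : 0 < s) (h2 : s < 2) :
    ∫ t in Ioi (0:ℝ), t ^ (s-1) / (1 + t^2) = π / (2 * Real.sin (π * s / 2)) := by
  have ha0 : 0 < s/2 := by linarith
  have ha1 : s/2 < 1 := by linarith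
  have hbeta := beta_refl (s/2) ha0 ha1
  have hmel := mellin_one_add (s/2) ha0 ha1 hbeta
  have hsub := MeasureTheory.integral_comp_rpow_Ioi_of_pos
    (g := fun y : ℝ => y ^ (s/2-1) / (1+y)) (p := 2) two_pos
  rw [hmel] at hsub
  have heq : ∫ x in Ioi (0:ℝ), (2 * x ^ ((2:ℝ) - 1)) • ((x ^ (2:ℝ)) ^ (s/2-1) / (1 + x ^ (2:ℝ)))
      = ∫ x in Ioi (0:ℝ), 2 * (x ^ (s-1) / (1 + x^2)) := by
    refine setIntegral_congr_fun measurableSet_Ioi fun x hx => ?_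
    rw [mem_Ioi] at hx
    rw [smul_eq_mul, show (2:ℝ) - 1 = 1 by norm_num, Real.rpow_one,
      ← Real.rpow_natCast x 2, ← Real.rpow_mul hx.le]
    push_cast
    rw [show (2:ℝ) * (s/2 - 1) = s - 2 by ring]
    have hxx : x * x ^ (s-2) = x ^ (s-1) := by
      nth_rewrite 1 [← Real.rpow_one x]
      rw [← Real.rpow_add hx]; ring_nf
    rw [mul_assoc, ← mul_div_assoc, hxx]
  rw [heq] at hsub
  rw [MeasureTheory.integral_const_mul] at hsub
  have hπs : π * (s/2) = π * s / 2 := by ring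
  rw [hπs] at hsub
  have hsin : 0 < Real.sin (π * s / 2) :=
    Real.sin_pos_of_pos_of_lt_pi (by positivity) (by nlinarith [Real.pi_pos])
  rw [eq_div_iff (mul_ne_zero two_ne_zero hsin.ne')]
  rw [eq_div_iff hsin.ne'] at hsub
  linear_combination hsub

lemma lam_integral (p : ℝ) (hp0 : 0 < p) (hp2 : p < 2) (l : ℝ) (hl : 0 < l) :
    ∫ z in Ioi (0:ℝ), z ^ (p-1) * (2 * l^2 / (z^2 + l^2))
      = l ^ p * (π / Real.sin (π * p / 2)) := by
  have hsub := MeasureTheory.integral_comp_mul_left_Ioi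
    (g := fun z : ℝ => z ^ (p-1) * (2 * l^2 / (z^2 + l^2))) 0 hl
  rw [mul_zero] at hsub
  have heq : ∫ x in Ioi (0:ℝ), (l*x) ^ (p-1) * (2 * l^2 / ((l*x)^2 + l^2))
      = ∫ x in Ioi (0:ℝ), (l ^ (p-1) * 2) * (x ^ (p-1) / (1 + x^2)) := by
    refine setIntegral_congr_fun measurableSet_Ioi fun x hx => ?_
    rw [mem_Ioi] at hx
    rw [Real.mul_rpow hl.le hx.le]
    have h1 : (l*x)^2 + l^2 = l^2 * (1 + x^2) := by ring
    rw [h1]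
    have h2 : (0:ℝ) < 1 + x^2 := by positivity
    field_simp
  rw [heq, MeasureTheory.integral_const_mul, mellin_one_add_sq p hp0 hp2] at hsub
  rw [smul_eq_mul] at hsub
  have hsin : Real.sin (π * p / 2) ≠ 0 := by
    refine ne_of_gt (Real.sin_pos_of_pos_of_lt_pi (by positivity) ?_)
    nlinarith [Real.pi_pos]
  have hl' : l ≠ 0 := hl.ne'
  have hlp : l * l ^ (p-1) = l ^ p := by
    nth_rewrite 1 [← Real.rpow_one l]
    rw [← Real.rpow_add hl]; norm_num
  field_simp at hsub ⊢
  linear_combination (-1) * hsub + (π / Real.sin (p * π / 2)) * hlp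

theorem coulson_p_schatten (n : ℕ) (lam : Fin n → ℝ) (hlam : ∀ j, 0 ≤ lam j)
    (hne : ∃ j, lam j ≠ 0) (p : ℝ) (hp0 : 0 < p) (hp2 : p < 2) :
    2 * ∑ j : Fin n, lam j ^ p =
      (2 * Real.sin (p * π / 2) / π) *
        ∫ z in Ioi (0 : ℝ),
          z ^ (p - 1) * ∑ j : Fin n, 2 * (lam j) ^ 2 / (z ^ 2 + (lam j) ^ 2) := by
  have hsin : 0 < Real.sin (π * p / 2) :=
    Real.sin_pos_of_pos_of_lt_pi (by positivity) (by nlinarith [Real.pi_pos])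
  set C := π / Real.sin (π * p / 2) with hC
  have hCpos : 0 < C := div_pos Real.pi_pos hsin
  have hint : ∀ j, (∫ z in Ioi (0:ℝ), z ^ (p-1) * (2 * (lam j)^2 / (z^2 + (lam j)^2)))
      = (lam j) ^ p * C := by
    intro j
    rcases eq_or_lt_of_le (hlam j) with h | h
    · simp [← h, Real.zero_rpow hp0.ne']
    · exact lam_integral p hp0 hp2 _ h
  have hintg : ∀ j : Fin n, IntegrableOn
      (fun z : ℝ => z ^ (p-1) * (2 * (lam j)^2 / (z^2 + (lam j)^2))) (Ioi 0) := by
    intro j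
    rcases eq_or_lt_of_le (hlam j) with h | h
    · have : (fun z : ℝ => z ^ (p-1) * (2 * (lam j)^2 / (z^2 + (lam j)^2)))
          = fun _ => (0:ℝ) := by funext z; simp [← h]
      rw [this]; exact integrable_zero _ _ _
    · by_contra hcon
      have h0 := hint j
      rw [MeasureTheory.integral_undef hcon] at h0
      have : 0 < (lam j) ^ p * C := mul_pos (Real.rpow_pos_of_pos h p) hCpos
      linarith [this, h0.symm]
  have hswap : (∫ z in Ioi (0:ℝ),
        z ^ (p - 1) * ∑ j : Fin n, 2 * (lam j) ^ 2 / (z ^ 2 + (lam j) ^ 2))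
      = ∑ j : Fin n, ∫ z in Ioi (0:ℝ), z ^ (p-1) * (2 * (lam j)^2 / (z^2 + (lam j)^2)) := by
    rw [← MeasureTheory.integral_finset_sum _ (fun j _ => hintg j)]
    refine setIntegral_congr_fun measurableSet_Ioi fun z _ => ?_
    rw [Finset.mul_sum]
  rw [hswap]
  have : ∑ j : Fin n, (∫ z in Ioi (0:ℝ), z ^ (p-1) * (2 * (lam j)^2 / (z^2 + (lam j)^2)))
      = (∑ j : Fin n, (lam j) ^ p) * C := by
    rw [Finset.sum_mul]; exact Finset.sum_congr rfl fun j _ => hint j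
  rw [this, hC, show p * π / 2 = π * p / 2 by ring]
  field_simp
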